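/- Let S be a finite singleton-rich semigroup and s, t ∈ S. Then s ≪ t (i.e. s = s⁺ t s*) if and only if s ∈ E(S)¹ t E(S)¹, i.e. s = etf for some e, f ∈ E(S) ∪ {1}. -/
import Mathlib


open scoped Classical

/-- φ*(s): the idempotent right identities of `s`. -/
def rIds {S : Type*} [Mul S] (s : S) : Set S := {e | e * e = e ∧ s * e = s}

/-- φ⁺(s): the idempotent left identities of `s`. -/
def lIds {S : Type*} [Mul S] (s : S) : Set S := {e | e * e = e ∧ e * s = s}

/-- `x` is the (necessarily unique) element of a singleton kernel (minimal ideal) of the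
subsemigroup `T`: `{x}` is an ideal of `T`, hence the minimal ideal of `T`. -/
def IsKer {S : Type*} [Semigroup S] (T : Subsemigroup S) (x : S) : Prop :=
  x ∈ T ∧ ∀ a ∈ T, a * x = x ∧ x * a = x

/-- The natural partial order on idempotents: `e ≤ f` iff `ef = fe = e`. -/
def nle {S : Type*} [Mul S] (e f : S) : Prop := e * f = e ∧ f * e = e

/-- The relation `≪`: `s ≪ t` iff `s = s⁺ t s*`, where `sa s = s*` and `pl s = s⁺`. -/
def ll {S : Type*} [Mul S] (sa pl : S → S) (s t : S) : Prop := s = pl s * t * sa s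

private lemma rIds_closure_mul {S : Type*} [Semigroup S] (s : S)
    (x : S) (hx : x ∈ Subsemigroup.closure (rIds s)) : s * x = s := by
  induction hx using Subsemigroup.closure_induction with
  | mem a ha => exact ha.2
  | mul a b _ _ ha hb => rw [← mul_assoc, ha, hb]

private lemma lIds_closure_mul {S : Type*} [Semigroup S] (s : S)
    (x : S) (hx : x ∈ Subsemigroup.closure (lIds s)) : x * s = s := by
  induction hx using Subsemigroup.closure_induction with
  | mem a ha => exact ha.2
  | mul a b _ _ ha hb => rw [mul_assoc, hb, ha]

/-- In a finite singleton-rich semigroup, `s ≪ t` iff `s ∈ E(S)¹ t E(S)¹`, i.e. `s = etf`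
for some `e, f ∈ E(S) ∪ {1}`. -/
theorem stmt5 {S : Type*} [Semigroup S] [Fintype S] (sa pl : S → S)
    (hsa : ∀ s : S, IsKer (Subsemigroup.closure (rIds s)) (sa s))
    (hpl : ∀ s : S, IsKer (Subsemigroup.closure (lIds s)) (pl s))
    (s t : S) :
    ll sa pl s t ↔
      (s = t ∨ (∃ e : S, e * e = e ∧ s = e * t) ∨ (∃ f : S, f * f = f ∧ s = t * f) ∨
        ∃ e f : S, e * e = e ∧ f * f = f ∧ s = e * t * f) := by
  have hsamem := (hsa s).1
  have hplmem := (hpl s).1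
  have hsaidem : sa s * sa s = sa s := ((hsa s).2 _ hsamem).1
  have hplidem : pl s * pl s = pl s := ((hpl s).2 _ hplmem).1
  have hssa : s * sa s = s := rIds_closure_mul s _ hsamem
  have hpls : pl s * s = s := lIds_closure_mul s _ hplmem
  constructor
  · intro h
    exact Or.inr (Or.inr (Or.inr ⟨pl s, sa s, hplidem, hsaidem, h⟩))
  · rintro (rfl | ⟨e, he, rfl⟩ | ⟨f, hf, rfl⟩ | ⟨e, f, he, hf, rfl⟩) <;> unfold ll
    · rw [hpls, hssa]
    · have heL : e ∈ lIds (e * t) := ⟨he, by rw [← mul_assoc, he]⟩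
      have h1 : pl (e * t) * e = pl (e * t) :=
        ((hpl (e * t)).2 e (Subsemigroup.subset_closure heL)).2
      have key : pl (e * t) * t = e * t := by rw [← h1, mul_assoc, hpls]
      rw [key, hssa]
    · have hfR : f ∈ rIds (t * f) := ⟨hf, by rw [mul_assoc, hf]⟩
      have h2 : f * sa (t * f) = sa (t * f) :=
        ((hsa (t * f)).2 f (Subsemigroup.subset_closure hfR)).1
      have key : t * sa (t * f) = t * f := by rw [← h2, ← mul_assoc, hssa]
      rw [mul_assoc, key, hpls]
    · have heL : e ∈ lIds (e * t * f) := ⟨he, by rw [← mul_assoc, ← mul_assoc, he]⟩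
      have hfR : f ∈ rIds (e * t * f) := ⟨hf, by rw [mul_assoc, hf]⟩
      have h1 : pl (e * t * f) * e = pl (e * t * f) :=
        ((hpl (e * t * f)).2 e (Subsemigroup.subset_closure heL)).2
      have h2 : f * sa (e * t * f) = sa (e * t * f) :=
        ((hsa (e * t * f)).2 f (Subsemigroup.subset_closure hfR)).1
      have k1 : pl (e * t * f) * (e * t) = pl (e * t * f) * t := by rw [← mul_assoc, h1]
      rw [← k1, ← h2, ← mul_assoc, mul_assoc (pl (e * t * f)) (e * t) f, hpls, hssa]
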